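/- Fix 0 ≤ l < m < ω and ordinals ε_0 ≥ … ≥ ε_m. Let δ = ω^{ω^{ε_0}}·…·ω^{ω^{ε_m}} and γ = ω^{ω^{ε_0}}·…·ω^{ω^{ε_l}}. If P is a tree with rank(P) = δ, then for every η < ω^{ω^{ε_{l+1}}}·…·ω^{ω^{ε_m}}, the separation function of the subtree P^{γ·η} \ P^{γ·(η+1)} (which has rank γ) coincides with the restriction of ς_P to Λ_2(P^{γ·η} \ P^{γ·(η+1)}). -/

import Mathlib

open Ordinal Set

universe u

/-- The set of maximal elements ("leaves") of `P`. -/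
def treeLeaves {α : Type u} [PartialOrder α] (P : Set α) : Set α :=
  {t ∈ P | ∀ s ∈ P, ¬ t < s}

/-- The derivative `P' = P \ Leaves P`. -/
def treeDeriv {α : Type u} [PartialOrder α] (P : Set α) : Set α :=
  P \ treeLeaves P

/-- The transfinite iterated derivative `P^ξ`. -/
noncomputable def derivIter {α : Type u} [PartialOrder α] (P : Set α) (ξ : Ordinal.{u}) :
    Set α :=
  Ordinal.limitRecOn ξ P (fun _ ih => treeDeriv ih)
    (fun o _ ih => ⋂ (ζ : Set.Iio o), ih ζ.1 ζ.2)

/-- `P` is a tree: every ancestor set is well-ordered (a well-founded chain). -/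
def IsTree {α : Type u} [PartialOrder α] (P : Set α) : Prop :=
  ∀ t ∈ P, IsChain (· ≤ ·) {s ∈ P | s ≤ t} ∧ {s ∈ P | s ≤ t}.WellFoundedOn (· < ·)

/-- `P` is well-founded: some transfinite derivative is empty. -/
def IsWFTree {α : Type u} [PartialOrder α] (P : Set α) : Prop :=
  ∃ ξ : Ordinal.{u}, derivIter P ξ = ∅

/-- The rank of a well-founded tree: the least `ξ` with `P^ξ = ∅`. -/
noncomputable def treeRank {α : Type u} [PartialOrder α] (P : Set α) : Ordinal.{u} :=
  sInf {ξ | derivIter P ξ = ∅}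

/-- `τ_P(t)`: the largest ordinal `ξ` with `t ∈ P^ξ`. -/
noncomputable def treeTau {α : Type u} [PartialOrder α] (P : Set α) (t : α) : Ordinal.{u} :=
  sSup {ξ | t ∈ derivIter P ξ}

/-- `τ_{P,β}(t)`: the largest ordinal `ξ` with `t ∈ P^{β·ξ}`. -/
noncomputable def treeTauMul {α : Type u} [PartialOrder α] (P : Set α) (β : Ordinal.{u})
    (t : α) : Ordinal.{u} :=
  sSup {ξ | t ∈ derivIter P (β * ξ)}

/-- `alpProd ε i = ω^{ω^{ε 0}} · ⋯ · ω^{ω^{ε i}}`. -/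
noncomputable def alpProd (ε : ℕ → Ordinal.{u}) : ℕ → Ordinal.{u}
  | 0 => omega0 ^ omega0 ^ ε 0
  | (i + 1) => alpProd ε i * omega0 ^ omega0 ^ ε (i + 1)

/-- The separation function `ς_P` of a tree whose rank has decomposition
`ω^{ω^{ε 0}} ⋯ ω^{ω^{ε l}}`: the least `i` such that `s, t` lie in the same block
`P^{α_i·δ} \ P^{α_i·(δ+1)}` for some ordinal `δ`. -/
noncomputable def sep {α : Type u} [PartialOrder α] (P : Set α) (ε : ℕ → Ordinal.{u})
    (s t : α) : ℕ :=
  sInf {i : ℕ | ∃ δ : Ordinal.{u},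
    s ∈ derivIter P (alpProd ε i * δ) \ derivIter P (alpProd ε i * (δ + 1)) ∧
    t ∈ derivIter P (alpProd ε i * δ) \ derivIter P (alpProd ε i * (δ + 1))}

/-- `indProd ε A l = ω^{ω^{ε 0}·1_A(0)} ⋯ ω^{ω^{ε l}·1_A(l)}`. -/
noncomputable def indProd (ε : ℕ → Ordinal.{u}) (A : Set ℕ) : ℕ → Ordinal.{u}
  | 0 => omega0 ^ (omega0 ^ ε 0 * A.indicator (fun _ => (1 : Ordinal.{u})) 0)
  | (i + 1) => indProd ε A i *
      omega0 ^ (omega0 ^ ε (i + 1) * A.indicator (fun _ => (1 : Ordinal.{u})) (i + 1))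

/-- `sumPow ε i = ω^{ε 0} + ⋯ + ω^{ε (i-1)}` (the partial sums `γ_i`). -/
noncomputable def sumPow (ε : ℕ → Ordinal.{u}) : ℕ → Ordinal.{u}
  | 0 => 0
  | (i + 1) => sumPow ε i + omega0 ^ ε i

/-- `indSum ε A i = Σ_{n < i} 1_A(n)·ω^{ε n}`. -/
noncomputable def indSum (ε : ℕ → Ordinal.{u}) (A : Set ℕ) : ℕ → Ordinal.{u}
  | 0 => 0
  | (i + 1) => indSum ε A i + A.indicator (fun _ => (1 : Ordinal.{u})) i * omega0 ^ ε i


variable {α : Type u} [PartialOrder α]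

theorem derivIter_zero (P : Set α) : derivIter P 0 = P := by
  simp [derivIter]

theorem derivIter_succ (P : Set α) (o : Ordinal.{u}) :
    derivIter P (o + 1) = treeDeriv (derivIter P o) := by
  rw [derivIter, Ordinal.add_one_eq_succ, Ordinal.limitRecOn_succ]
  rfl

theorem derivIter_limit (P : Set α) {o : Ordinal.{u}} (h : Order.IsSuccLimit o) :
    derivIter P o = ⋂ (ζ : Set.Iio o), derivIter P ζ.1 := by
  rw [derivIter, Ordinal.limitRecOn_limit _ _ _ _ h]
  rfl

theorem treeDeriv_eq (P : Set α) : treeDeriv P = {x ∈ P | ∃ s ∈ P, x < s} := by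
  ext x
  simp only [treeDeriv, treeLeaves, mem_diff, mem_setOf_eq, mem_sep_iff]
  constructor
  · rintro ⟨hx, h⟩
    refine ⟨hx, ?_⟩
    by_contra hc
    push_neg at hc
    exact h ⟨hx, fun s hs => fun hlt => hc s hs hlt⟩
  · rintro ⟨hx, s, hs, hlt⟩
    exact ⟨hx, fun ⟨_, h⟩ => h s hs hlt⟩

theorem derivIter_anti (P : Set α) : ∀ {a b : Ordinal.{u}}, a ≤ b →
    derivIter P b ⊆ derivIter P a := by
  intro a b
  induction b using Ordinal.limitRecOn with
  | zero =>
    intro h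
    rw [nonpos_iff_eq_zero.mp h]
  | add_one o ih =>
    intro h
    rcases (Order.le_succ_iff_eq_or_le.mp h) with h | h
    · exact h ▸ subset_rfl
    · rw [derivIter_succ]
      exact (diff_subset).trans (ih h)
  | limit o ho ih =>
    intro h
    rcases eq_or_lt_of_le h with h | h
    · exact h ▸ subset_rfl
    · rw [derivIter_limit P ho]
      exact iInter_subset_of_subset ⟨a, h⟩ subset_rfl

/-- Downward closure: ancestors survive as long as a descendant does. -/
theorem mem_derivIter_of_lt (P : Set α) {s t : α} (hs : s ∈ P) (hst : s < t) :
    ∀ {ξ : Ordinal.{u}}, t ∈ derivIter P ξ → s ∈ derivIter P ξ := by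
  intro ξ
  induction ξ using Ordinal.limitRecOn with
  | zero => rw [derivIter_zero]; intro _; exact hs
  | add_one o ih =>
    rw [derivIter_succ, treeDeriv_eq]
    rintro ⟨ht, u, hu, htu⟩
    exact ⟨ih ht, t, ht, hst⟩
  | limit o ho ih =>
    rw [derivIter_limit P ho]
    intro ht
    simp only [mem_iInter] at ht ⊢
    exact fun ζ => ih ζ.1 ζ.2 (ht ζ)

/-- Limit formula for shifted indices. -/
theorem derivIter_add_limit (P : Set α) (a : Ordinal.{u}) {ξ : Ordinal.{u}} (hξ : Order.IsSuccLimit ξ) :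
    derivIter P (a + ξ) = ⋂ (ζ : Set.Iio ξ), derivIter P (a + ζ.1) := by
  rw [derivIter_limit P (Ordinal.isSuccLimit_add a hξ)]
  apply subset_antisymm
  · intro x hx
    simp only [mem_iInter] at hx ⊢
    intro ζ
    exact hx ⟨a + ζ.1, by exact (add_lt_add_iff_left a).mpr ζ.2⟩
  · intro x hx
    simp only [mem_iInter] at hx ⊢
    rintro ⟨z, hz⟩
    by_cases hza : z ≤ a
    · exact derivIter_anti P (by simpa using hza) (hx ⟨0, hξ.pos⟩)
    · push_neg at hza
      have h1 : a + (z - a) = z := Ordinal.add_sub_cancel_of_le hza.le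
      have h2 : z - a < ξ := by
        rw [← add_lt_add_iff_left a, h1]; exact hz
      have := hx ⟨z - a, h2⟩
      rwa [h1] at this

/-- The key block formula. -/
theorem derivIter_sdiff (P : Set α) (a b : Ordinal.{u}) :
    ∀ ξ : Ordinal.{u}, derivIter (derivIter P a \ derivIter P b) ξ
      = derivIter P (a + ξ) \ derivIter P b := by
  intro ξ
  induction ξ using Ordinal.limitRecOn with
  | zero => rw [derivIter_zero, add_zero]
  | add_one o ih =>
    rw [derivIter_succ, ih, ← add_assoc, derivIter_succ,
      treeDeriv_eq]
    rw [treeDeriv_eq]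
    ext x
    simp only [mem_sep_iff, mem_diff]
    constructor
    · rintro ⟨⟨hx, hxb⟩, s, ⟨hs, _⟩, hlt⟩
      exact ⟨⟨hx, ⟨s, hs, hlt⟩⟩, hxb⟩
    · rintro ⟨⟨hx, s, hs, hlt⟩, hxb⟩
      refine ⟨⟨hx, hxb⟩, s, ⟨hs, ?_⟩, hlt⟩
      intro hsb
      have hxP : x ∈ P := by
        have := derivIter_anti P (zero_le (a := a + o)) hx
        rwa [derivIter_zero] at this
      exact hxb (mem_derivIter_of_lt P hxP hlt hsb)
  | limit o ho ih =>
    rw [derivIter_limit _ ho, derivIter_add_limit P a ho]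
    ext x
    simp only [mem_iInter, mem_diff]
    constructor
    · intro h
      have h0 := h ⟨0, ho.pos⟩
      rw [ih 0 ho.pos] at h0
      refine ⟨fun ζ => ?_, h0.2⟩
      have := h ζ
      rw [ih ζ.1 ζ.2] at this
      exact this.1
    · rintro ⟨h1, h2⟩ ζ
      rw [ih ζ.1 ζ.2]
      exact ⟨h1 ζ, h2⟩

theorem derivIter_stab (P : Set α) {a : Ordinal.{u}}
    (h : derivIter P a = derivIter P (a + 1)) :
    ∀ ζ : Ordinal.{u}, derivIter P (a + ζ) = derivIter P a := by
  intro ζ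
  induction ζ using Ordinal.limitRecOn with
  | zero => rw [add_zero]
  | add_one o ih =>
    rw [← add_assoc, derivIter_succ, ih, ← derivIter_succ, ← h]
  | limit o ho ih =>
    rw [derivIter_add_limit P a ho]
    apply subset_antisymm
    · exact iInter_subset_of_subset ⟨0, ho.pos⟩ (by rw [add_zero])
    · intro x hx
      simp only [mem_iInter]
      rintro ζ
      rw [ih ζ.1 ζ.2]
      exact hx

theorem derivIter_rank (P : Set α) (hWF : ∃ ξ : Ordinal.{u}, derivIter P ξ = ∅) :
    derivIter P (treeRank P) = ∅ :=
  csInf_mem hWF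

theorem derivIter_ne_empty (P : Set α) {ξ : Ordinal.{u}} (h : ξ < treeRank P) :
    derivIter P ξ ≠ ∅ := by
  intro he
  exact absurd (csInf_le' (s := {ξ | derivIter P ξ = ∅}) he) (not_le.mpr h)

theorem derivIter_sdiff_nonempty (P : Set α) (hWF : ∃ ξ : Ordinal.{u}, derivIter P ξ = ∅)
    {a b : Ordinal.{u}} (hab : a < b) (ha : a < treeRank P) :
    (derivIter P a \ derivIter P b).Nonempty := by
  rw [nonempty_iff_ne_empty]
  intro he
  have hsub : derivIter P a ⊆ derivIter P b := by
    rwa [diff_eq_empty] at he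
  have heq : derivIter P a = derivIter P (a + 1) := by
    apply subset_antisymm
    · exact hsub.trans (derivIter_anti P (by rwa [Ordinal.add_one_eq_succ, Order.succ_le_iff]))
    · exact derivIter_anti P (le_self_add)
  have hstab := derivIter_stab P heq (treeRank P - a)
  rw [Ordinal.add_sub_cancel_of_le ha.le, derivIter_rank P hWF] at hstab
  exact derivIter_ne_empty P ha hstab.symm

theorem alpProd_factor (ε : ℕ → Ordinal.{u}) (l : ℕ) :
    ∀ k : ℕ, alpProd ε (l + 1 + k) = alpProd ε l * alpProd (fun i => ε (l + 1 + i)) k := by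
  intro k
  induction k with
  | zero => simp [alpProd]
  | succ k ih =>
    have : l + 1 + (k + 1) = (l + 1 + k) + 1 := by omega
    rw [this, alpProd, ih, alpProd, mul_assoc, this]

theorem alpProd_dvd (ε : ℕ → Ordinal.{u}) {i l : ℕ} (hil : i ≤ l) :
    ∃ c : Ordinal.{u}, alpProd ε l = alpProd ε i * c := by
  rcases eq_or_lt_of_le hil with h | h
  · exact ⟨1, by rw [h, mul_one]⟩
  · refine ⟨alpProd (fun j => ε (i + 1 + j)) (l - (i + 1)), ?_⟩
    have h' : l = i + 1 + (l - (i + 1)) := by omega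
    have hf := alpProd_factor ε i (l - (i + 1))
    rwa [← h'] at hf

theorem nat_sInf_eq {S1 S2 : Set ℕ} {l : ℕ} (h1 : l ∈ S1) (h2 : l ∈ S2)
    (h : ∀ i ≤ l, (i ∈ S1 ↔ i ∈ S2)) : sInf S1 = sInf S2 := by
  have m1 : sInf S1 ∈ S1 := Nat.sInf_mem ⟨l, h1⟩
  have m2 : sInf S2 ∈ S2 := Nat.sInf_mem ⟨l, h2⟩
  have le1 : sInf S1 ≤ l := Nat.sInf_le h1
  have le2 : sInf S2 ≤ l := Nat.sInf_le h2
  exact le_antisymm (Nat.sInf_le ((h _ le2).mpr m2)) (Nat.sInf_le ((h _ le1).mp m1))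


/-- if `rank(P) = ω^{ω^{ε_0}}⋯ω^{ω^{ε_m}}` and
`γ = ω^{ω^{ε_0}}⋯ω^{ω^{ε_l}}` for `l < m`, then for every
`η < ω^{ω^{ε_{l+1}}}⋯ω^{ω^{ε_m}}` the block `P^{γ·η} \ P^{γ·(η+1)}` has rank `γ`
and its separation function agrees with the restriction of `ς_P`. -/
theorem statement13 {α : Type u} [PartialOrder α] (l m : ℕ) (hlm : l < m)
    (ε : ℕ → Ordinal.{u}) (hε : ∀ i < m, ε (i + 1) ≤ ε i)
    (P : Set α) (hP : IsTree P) (hWF : IsWFTree P)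
    (hrank : treeRank P = alpProd ε m)
    (η : Ordinal.{u}) (hη : η < alpProd (fun i => ε (l + 1 + i)) (m - (l + 1))) :
    treeRank (derivIter P (alpProd ε l * η) \ derivIter P (alpProd ε l * (η + 1))) =
      alpProd ε l ∧
    ∀ s ∈ derivIter P (alpProd ε l * η) \ derivIter P (alpProd ε l * (η + 1)),
      ∀ t ∈ derivIter P (alpProd ε l * η) \ derivIter P (alpProd ε l * (η + 1)),
        s < t →
        sep (derivIter P (alpProd ε l * η) \ derivIter P (alpProd ε l * (η + 1)))
            ε s t = sep P ε s t := by
  have hfact : alpProd ε m = alpProd ε l * alpProd (fun i => ε (l + 1 + i)) (m - (l + 1)) := by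
    have hm : m = l + 1 + (m - (l + 1)) := by omega
    have := alpProd_factor ε l (m - (l + 1))
    rwa [← hm] at this
  set γ := alpProd ε l with hγdef
  set R := alpProd (fun i => ε (l + 1 + i)) (m - (l + 1)) with hRdef
  set Q := derivIter P (γ * η) \ derivIter P (γ * (η + 1)) with hQdef
  have hsucc : γ * η + γ = γ * (η + 1) := by rw [mul_add, mul_one]
  have hδrank : γ * (η + 1) ≤ treeRank P := by
    rw [hrank, hfact]
    exact mul_le_mul_right (by rwa [Ordinal.add_one_eq_succ, Order.succ_le_iff]) γ
  have hQ : ∀ ξ : Ordinal.{u}, derivIter Q ξ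
      = derivIter P (γ * η + ξ) \ derivIter P (γ * (η + 1)) :=
    derivIter_sdiff P _ _
  have hγS : derivIter Q γ = ∅ := by
    rw [hQ γ, hsucc, diff_self]
  have hQne : ∀ ξ < γ, derivIter Q ξ ≠ ∅ := by
    intro ξ hξ
    rw [hQ ξ, ← nonempty_iff_ne_empty]
    have h1 : γ * η + ξ < γ * (η + 1) := by
      rw [← hsucc]; exact (add_lt_add_iff_left _).mpr hξ
    exact derivIter_sdiff_nonempty P hWF h1 (h1.trans_le hδrank)
  constructor
  · have h1 : treeRank Q ≤ γ :=
      csInf_le' (show γ ∈ {ξ : Ordinal.{u} | derivIter Q ξ = ∅} from hγS)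
    refine le_antisymm h1 (le_csInf ⟨γ, hγS⟩ fun b hb => ?_)
    by_contra hc
    exact hQne b (not_le.mp hc) hb
  · intro s hs t ht _
    have hsQ : s ∈ Q := hs
    have htQ : t ∈ Q := ht
    apply nat_sInf_eq (l := l)
    · -- l is in the Q-set, via δ = 0
      refine ⟨0, ?_, ?_⟩ <;>
      · constructor
        · rw [mul_zero, derivIter_zero]; first | exact hsQ | exact htQ
        · rw [zero_add, mul_one, hγS]; exact notMem_empty _
    · -- l is in the P-set, via δ = η
      exact ⟨η, hs, ht⟩
    · intro i hil
      obtain ⟨c, hc⟩ := alpProd_dvd ε hil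
      have key : ∀ δ : Ordinal.{u}, γ * η + alpProd ε i * δ = alpProd ε i * (c * η + δ) := by
        intro δ
        rw [mul_add, ← mul_assoc, ← hc]
      constructor
      · rintro ⟨δ, ⟨hs1, hs2⟩, ht1, ht2⟩
        refine ⟨c * η + δ, ⟨?_, ?_⟩, ?_, ?_⟩
        · rw [hQ] at hs1; rw [← key]; exact hs1.1
        · rw [add_assoc, ← key]
          intro hmem
          rw [hQ] at hs2
          exact hs2 ⟨hmem, hsQ.2⟩
        · rw [hQ] at ht1; rw [← key]; exact ht1.1
        · rw [add_assoc, ← key]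
          intro hmem
          rw [hQ] at ht2
          exact ht2 ⟨hmem, htQ.2⟩
      · rintro ⟨δ', ⟨hs1, hs2⟩, ht1, ht2⟩
        have hge : c * η ≤ δ' := by
          by_contra hlt
          push_neg at hlt
          have h1 : alpProd ε i * (δ' + 1) ≤ γ * η := by
            have : δ' + 1 ≤ c * η := by
              rwa [Ordinal.add_one_eq_succ, Order.succ_le_iff]
            calc alpProd ε i * (δ' + 1) ≤ alpProd ε i * (c * η) := mul_le_mul_right this _
            _ = γ * η := by rw [← mul_assoc, ← hc]
          exact hs2 (derivIter_anti P h1 hsQ.1)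
        refine ⟨δ' - c * η, ⟨?_, ?_⟩, ?_, ?_⟩
        · rw [hQ, key, Ordinal.add_sub_cancel_of_le hge]
          exact ⟨hs1, hsQ.2⟩
        · rw [hQ, key, ← add_assoc, Ordinal.add_sub_cancel_of_le hge]
          rintro ⟨hmem, -⟩
          exact hs2 hmem
        · rw [hQ, key, Ordinal.add_sub_cancel_of_le hge]
          exact ⟨ht1, htQ.2⟩
        · rw [hQ, key, ← add_assoc, Ordinal.add_sub_cancel_of_le hge]
          rintro ⟨hmem, -⟩
          exact ht2 hmem
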